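/- arXiv:2508.15509 — 7 statements merged into one kernel-verified Lean document; each statement's English description precedes it below -/
import Mathlib

section
/- Let g : ℝ^n → ℝ be differentiable, μ-strongly convex, and have L-Lipschitz continuous gradient, where 0 < μ ≤ L. Then for all x, y, z ∈ ℝ^n it holds that ⟨z − y, ∇g(x)⟩ ≥ g(z) − g(y) + (μ/4)‖y − z‖² − L‖z − x‖². -/
set_option maxHeartbeats 1000000

open scoped RealInnerProductSpace

variable {n : ℕ}

private lemma stmt0LineDeriv (g : EuclideanSpace ℝ (Fin n) → ℝ) (hdiff : Differentiable ℝ g)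
    (a v : EuclideanSpace ℝ (Fin n)) (t : ℝ) :
    HasDerivAt (fun s : ℝ => g (a + s • v)) ⟪gradient g (a + t • v), v⟫ t := by
  have h1 : HasDerivAt (fun s : ℝ => a + s • v) v t := by
    simpa using ((hasDerivAt_id t).smul_const v).const_add a
  have h2 := ((hdiff (a + t • v)).hasGradientAt).hasFDerivAt
  have h3 := h2.comp_hasDerivAt t h1
  rw [toDual_gradient] at h3; rw [inner_gradient_left]; exact h3

private lemma stmt0Upper (g : EuclideanSpace ℝ (Fin n) → ℝ) (hdiff : Differentiable ℝ g)
    (L : ℝ) (hL : 0 ≤ L)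
    (hlip : ∀ x y : EuclideanSpace ℝ (Fin n), ‖gradient g x - gradient g y‖ ≤ L * ‖x - y‖)
    (a v : EuclideanSpace ℝ (Fin n)) :
    g (a + v) ≤ g a + ⟪gradient g a, v⟫ + L / 2 * ‖v‖ ^ 2 := by
  set F : ℝ → ℝ := fun t => g (a + t • v) - t * ⟪gradient g a, v⟫ - L * t ^ 2 / 2 * ‖v‖ ^ 2
    with hF
  have hFd : ∀ t : ℝ, HasDerivAt F
      (⟪gradient g (a + t • v) - gradient g a, v⟫ - L * t * ‖v‖ ^ 2) t := by
    intro t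
    have h1 := stmt0LineDeriv g hdiff a v t
    have h2 : HasDerivAt (fun s : ℝ => s * ⟪gradient g a, v⟫) ⟪gradient g a, v⟫ t := by
      simpa using (hasDerivAt_id t).mul_const _
    have h3 : HasDerivAt (fun s : ℝ => L * s ^ 2 / 2 * ‖v‖ ^ 2) (L * t * ‖v‖ ^ 2) t := by
      have : HasDerivAt (fun s : ℝ => s ^ 2) (2 * t) t := by
        simpa using hasDerivAt_pow 2 t
      have := ((this.const_mul L).div_const 2).mul_const (‖v‖ ^ 2)
      rw [show L * t * ‖v‖ ^ 2 = L * (2 * t) / 2 * ‖v‖ ^ 2 by ring]; exact this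
    have h4 := (h1.sub h2).sub h3
    rw [inner_sub_left]
    exact h4
  have hanti : AntitoneOn F (Set.Icc 0 1) := by
    apply antitoneOn_of_deriv_nonpos (convex_Icc 0 1)
    · exact Continuous.continuousOn (by
        have : Continuous F := by
          apply Continuous.sub
          apply Continuous.sub
          · exact hdiff.continuous.comp (by continuity)
          · continuity
          · continuity
        exact this)
    · intro t ht
      exact ((hFd t).differentiableAt).differentiableWithinAt
    · intro t ht
      rw [interior_Icc] at ht
      rw [(hFd t).deriv]
      have h1 : ⟪gradient g (a + t • v) - gradient g a, v⟫ ≤ L * t * ‖v‖ ^ 2 := by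
        calc ⟪gradient g (a + t • v) - gradient g a, v⟫
            ≤ ‖gradient g (a + t • v) - gradient g a‖ * ‖v‖ := real_inner_le_norm _ _
          _ ≤ L * ‖(a + t • v) - a‖ * ‖v‖ := by
              have := hlip (a + t • v) a
              exact mul_le_mul_of_nonneg_right this (norm_nonneg v)
          _ = L * t * ‖v‖ ^ 2 := by
              have : ‖(a + t • v) - a‖ = t * ‖v‖ := by
                rw [add_sub_cancel_left, norm_smul, Real.norm_eq_abs,
                  abs_of_nonneg ht.1.le]
              rw [this]; ring
      linarith
  have := hanti (Set.mem_Icc.2 ⟨le_refl 0, zero_le_one⟩)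
    (Set.mem_Icc.2 ⟨zero_le_one, le_refl 1⟩) zero_le_one
  simp only [hF, zero_smul, one_smul, add_zero, zero_mul, zero_pow, mul_zero,
    zero_div, sub_zero, one_mul, one_pow, mul_one] at this
  linarith

private lemma stmt0Lower (g : EuclideanSpace ℝ (Fin n) → ℝ) (hdiff : Differentiable ℝ g)
    (μ : ℝ) (hμ : 0 < μ)
    (hsc : ∀ x y : EuclideanSpace ℝ (Fin n),
      ⟪gradient g x - gradient g y, x - y⟫ ≥ μ * ‖x - y‖ ^ 2)
    (a v : EuclideanSpace ℝ (Fin n)) :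
    g (a + v) ≥ g a + ⟪gradient g a, v⟫ + μ / 2 * ‖v‖ ^ 2 := by
  set F : ℝ → ℝ := fun t => g (a + t • v) - t * ⟪gradient g a, v⟫ - μ * t ^ 2 / 2 * ‖v‖ ^ 2
    with hF
  have hFd : ∀ t : ℝ, HasDerivAt F
      (⟪gradient g (a + t • v) - gradient g a, v⟫ - μ * t * ‖v‖ ^ 2) t := by
    intro t
    have h1 := stmt0LineDeriv g hdiff a v t
    have h2 : HasDerivAt (fun s : ℝ => s * ⟪gradient g a, v⟫) ⟪gradient g a, v⟫ t := by
      simpa using (hasDerivAt_id t).mul_const _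
    have h3 : HasDerivAt (fun s : ℝ => μ * s ^ 2 / 2 * ‖v‖ ^ 2) (μ * t * ‖v‖ ^ 2) t := by
      have : HasDerivAt (fun s : ℝ => s ^ 2) (2 * t) t := by
        simpa using hasDerivAt_pow 2 t
      have := ((this.const_mul μ).div_const 2).mul_const (‖v‖ ^ 2)
      rw [show μ * t * ‖v‖ ^ 2 = μ * (2 * t) / 2 * ‖v‖ ^ 2 by ring]; exact this
    have h4 := (h1.sub h2).sub h3
    rw [inner_sub_left]
    exact h4
  have hmono : MonotoneOn F (Set.Icc 0 1) := by
    apply monotoneOn_of_deriv_nonneg (convex_Icc 0 1)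
    · exact Continuous.continuousOn (by
        have : Continuous F := by
          apply Continuous.sub
          apply Continuous.sub
          · exact hdiff.continuous.comp (by continuity)
          · continuity
          · continuity
        exact this)
    · intro t ht
      exact ((hFd t).differentiableAt).differentiableWithinAt
    · intro t ht
      rw [interior_Icc] at ht
      rw [(hFd t).deriv]
      have h1 : ⟪gradient g (a + t • v) - gradient g a, v⟫ ≥ μ * t * ‖v‖ ^ 2 := by
        have hs := hsc (a + t • v) a
        have hsub : (a + t • v) - a = t • v := add_sub_cancel_left a (t • v)
        rw [hsub] at hs
        rw [real_inner_smul_right, norm_smul, Real.norm_eq_abs,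
          abs_of_nonneg ht.1.le, mul_pow] at hs
        have ht0 : 0 < t := ht.1
        nlinarith [hs]
      linarith
  have := hmono (Set.mem_Icc.2 ⟨le_refl 0, zero_le_one⟩)
    (Set.mem_Icc.2 ⟨zero_le_one, le_refl 1⟩) zero_le_one
  simp only [hF, zero_smul, one_smul, add_zero, zero_mul, zero_pow, mul_zero,
    zero_div, sub_zero, one_mul, one_pow, mul_one] at this
  linarith

/-- If `g : ℝ^n → ℝ` is differentiable, `μ`-strongly convex and has an
`L`-Lipschitz gradient with `0 < μ ≤ L`, then for all `x, y, z`,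
`⟪z − y, ∇g(x)⟫ ≥ g(z) − g(y) + (μ/4)‖y − z‖² − L‖z − x‖²`. -/
theorem stmt0 (n : ℕ) (μ L : ℝ) (hμ : 0 < μ) (hμL : μ ≤ L)
    (g : EuclideanSpace ℝ (Fin n) → ℝ)
    (hdiff : Differentiable ℝ g)
    (hsc : ∀ x y : EuclideanSpace ℝ (Fin n),
      ⟪gradient g x - gradient g y, x - y⟫ ≥ μ * ‖x - y‖ ^ 2)
    (hlip : ∀ x y : EuclideanSpace ℝ (Fin n),
      ‖gradient g x - gradient g y‖ ≤ L * ‖x - y‖) :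
    ∀ x y z : EuclideanSpace ℝ (Fin n), ⟪z - y, gradient g x⟫ ≥
      g z - g y + (μ / 4) * ‖y - z‖ ^ 2 - L * ‖z - x‖ ^ 2 := by
  intro x y z
  have hL0 : (0:ℝ) ≤ L := le_trans hμ.le hμL
  have hup := stmt0Upper g hdiff L hL0 hlip x (z - x)
  rw [add_sub_cancel] at hup
  have hlo := stmt0Lower g hdiff μ hμ hsc x (y - x)
  rw [add_sub_cancel] at hlo
  have htri : ‖y - z‖ ≤ ‖y - x‖ + ‖z - x‖ := by
    have := norm_sub_le (y - x) (z - x)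
    simpa [sub_sub_sub_cancel_right] using this
  have hinner : ⟪z - y, gradient g x⟫
      = ⟪gradient g x, z - x⟫ - ⟪gradient g x, y - x⟫ := by
    rw [← inner_sub_right, real_inner_comm]
    congr 1
    abel
  have h1 : (0:ℝ) ≤ ‖y - x‖ := norm_nonneg _
  have h2 : (0:ℝ) ≤ ‖z - x‖ := norm_nonneg _
  have h3 : (0:ℝ) ≤ ‖y - z‖ := norm_nonneg _
  nlinarith [sq_nonneg (‖y - x‖ - ‖z - x‖), sq_nonneg (‖y - x‖ + ‖z - x‖),
    mul_le_mul_of_nonneg_left (mul_self_le_mul_self h3 htri) (le_of_lt (show (0:ℝ) < μ/4 by linarith))]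
end

section
/- Let τ ≥ 1 be an integer, γ > 0, and let x̄ ∈ ℝ^n and φ_{i,t} ∈ ℝ^n for i ∈ {1,…,N}, t ∈ {0,…,τ−1}. Then −(2γ/N) Σ_{i=1}^N Σ_{t=0}^{τ−1} ⟨x̄ − x*, ∇f_i(φ_{i,t})⟩ ≤ −2γτ (F(x̄) − F(x*)) − (μτγ/2)‖x̄ − x*‖² + (2γL/N) Σ_{i=1}^N Σ_{t=0}^{τ−1} ‖φ_{i,t} − x̄‖². -/
open scoped RealInnerProductSpace

variable {E : Type*} [NormedAddCommGroup E] [InnerProductSpace ℝ E] [CompleteSpace E]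

lemma line_hasDerivAt (f : E → ℝ) (hd : Differentiable ℝ f) (x d : E) (t : ℝ) :
    HasDerivAt (fun s : ℝ => f (x + s • d)) ⟪gradient f (x + t • d), d⟫ t := by
  have h1 : HasDerivAt (fun s : ℝ => x + s • d) d t := by
    simpa using ((hasDerivAt_id t).smul_const d).const_add x
  have h2 := ((hd (x + t • d)).hasGradientAt).hasFDerivAt
  have h3 := h2.comp_hasDerivAt t h1
  simp only [Function.comp_def] at h3
  convert h3 using 1
  · rfl
  · rfl
  · simp [InnerProductSpace.toDual_apply_apply]

lemma sc_lower (f : E → ℝ) (hd : Differentiable ℝ f) (μ : ℝ)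
    (hsc : ∀ x y : E, ⟪gradient f x - gradient f y, x - y⟫ ≥ μ * ‖x - y‖ ^ 2)
    (x y : E) :
    f x + ⟪gradient f x, y - x⟫ + μ / 2 * ‖y - x‖ ^ 2 ≤ f y := by
  set d := y - x with hdd
  set g : ℝ → ℝ := fun t => f (x + t • d) - (⟪gradient f x, d⟫ * t + μ * ‖d‖ ^ 2 / 2 * t ^ 2)
    with hgdef
  have hg : ∀ t : ℝ, HasDerivAt g
      (⟪gradient f (x + t • d), d⟫ - (⟪gradient f x, d⟫ - 0 + μ * ‖d‖ ^ 2 / 2 * (2 * t))) t := by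
    intro t
    refine (line_hasDerivAt f hd x d t).sub ?_
    have ha : HasDerivAt (fun t : ℝ => ⟪gradient f x, d⟫ * t) (⟪gradient f x, d⟫ * 1 - 0) t := by
      simpa using (hasDerivAt_id t).const_mul ⟪gradient f x, d⟫
    have hb : HasDerivAt (fun t : ℝ => μ * ‖d‖ ^ 2 / 2 * t ^ 2)
        (μ * ‖d‖ ^ 2 / 2 * (2 * t)) t := by
      simpa [mul_comm, mul_assoc] using (hasDerivAt_pow 2 t).const_mul (μ * ‖d‖ ^ 2 / 2)
    convert ha.add hb using 1 <;> simp [Pi.add_def]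
  have mono : MonotoneOn g (Set.Icc (0 : ℝ) 1) := by
    refine monotoneOn_of_deriv_nonneg (convex_Icc 0 1)
      (fun t _ => ((hg t).continuousAt).continuousWithinAt)
      (fun t _ => ((hg t).differentiableAt).differentiableWithinAt) ?_
    intro t ht
    rw [interior_Icc] at ht
    rw [(hg t).deriv]
    have h1 := hsc (x + t • d) x
    have h2 : (x + t • d) - x = t • d := by abel
    rw [h2] at h1
    rw [real_inner_smul_right, inner_sub_left] at h1
    have hnorm : ‖t • d‖ = t * ‖d‖ := by
      rw [norm_smul, Real.norm_eq_abs, abs_of_pos ht.1]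
    rw [hnorm] at h1
    have ht0 : 0 < t := ht.1
    nlinarith [h1, sq_nonneg ‖d‖]
  have h01 := mono (Set.left_mem_Icc.2 zero_le_one) (Set.right_mem_Icc.2 zero_le_one) zero_le_one
  have hg0 : g 0 = f x := by simp [hgdef]
  have hg1 : g 1 = f y - (⟪gradient f x, d⟫ + μ * ‖d‖ ^ 2 / 2) := by
    simp [hgdef, hdd]
  rw [hg0, hg1] at h01
  linarith

lemma smooth_upper (f : E → ℝ) (hd : Differentiable ℝ f) (L : ℝ) (hL : 0 ≤ L)
    (hlip : ∀ x y : E, ‖gradient f x - gradient f y‖ ≤ L * ‖x - y‖)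
    (x y : E) :
    f y ≤ f x + ⟪gradient f x, y - x⟫ + L / 2 * ‖y - x‖ ^ 2 := by
  set d := y - x with hdd
  set g : ℝ → ℝ := fun t => f (x + t • d) - (⟪gradient f x, d⟫ * t + L * ‖d‖ ^ 2 / 2 * t ^ 2)
    with hgdef
  have hg : ∀ t : ℝ, HasDerivAt g
      (⟪gradient f (x + t • d), d⟫ - (⟪gradient f x, d⟫ - 0 + L * ‖d‖ ^ 2 / 2 * (2 * t))) t := by
    intro t
    refine (line_hasDerivAt f hd x d t).sub ?_
    have ha : HasDerivAt (fun t : ℝ => ⟪gradient f x, d⟫ * t) (⟪gradient f x, d⟫ * 1 - 0) t := by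
      simpa using (hasDerivAt_id t).const_mul ⟪gradient f x, d⟫
    have hb : HasDerivAt (fun t : ℝ => L * ‖d‖ ^ 2 / 2 * t ^ 2)
        (L * ‖d‖ ^ 2 / 2 * (2 * t)) t := by
      simpa [mul_comm, mul_assoc] using (hasDerivAt_pow 2 t).const_mul (L * ‖d‖ ^ 2 / 2)
    convert ha.add hb using 1 <;> simp [Pi.add_def]
  have anti : AntitoneOn g (Set.Icc (0 : ℝ) 1) := by
    refine antitoneOn_of_deriv_nonpos (convex_Icc 0 1)
      (fun t _ => ((hg t).continuousAt).continuousWithinAt)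
      (fun t _ => ((hg t).differentiableAt).differentiableWithinAt) ?_
    intro t ht
    rw [interior_Icc] at ht
    rw [(hg t).deriv]
    have hcs : ⟪gradient f (x + t • d) - gradient f x, d⟫ ≤
        ‖gradient f (x + t • d) - gradient f x‖ * ‖d‖ := real_inner_le_norm _ _
    have hl := hlip (x + t • d) x
    have h2 : (x + t • d) - x = t • d := by abel
    rw [h2] at hl
    have hnorm : ‖t • d‖ = t * ‖d‖ := by
      rw [norm_smul, Real.norm_eq_abs, abs_of_pos ht.1]
    rw [hnorm] at hl
    rw [inner_sub_left] at hcs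
    have ht0 : 0 < t := ht.1
    nlinarith [norm_nonneg d, norm_nonneg (gradient f (x + t • d) - gradient f x)]
  have h01 := anti (Set.left_mem_Icc.2 zero_le_one) (Set.right_mem_Icc.2 zero_le_one) zero_le_one
  have hg0 : g 0 = f x := by simp [hgdef]
  have hg1 : g 1 = f y - (⟪gradient f x, d⟫ + L * ‖d‖ ^ 2 / 2) := by
    simp [hgdef, hdd]
  rw [hg0, hg1] at h01
  linarith

open scoped RealInnerProductSpace BigOperators

/-- For `L`-smooth, `μ`-strongly convex `f_i` with minimizer `x*` of the
average `F`:
`−(2γ/N) Σ_i Σ_t ⟪x̄ − x*, ∇f_i(φ_{i,t})⟫ ≤ −2γτ(F(x̄) − F(x*)) − (μτγ/2)‖x̄ − x*‖²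
  + (2γL/N) Σ_{i,t} ‖φ_{i,t} − x̄‖²`. -/
theorem stmt2 (n N τ : ℕ) (hN : 0 < N) (hτ : 1 ≤ τ)
    (γ L μ : ℝ) (hγ : 0 < γ) (hμ : 0 < μ) (hμL : μ ≤ L)
    (f : Fin N → EuclideanSpace ℝ (Fin n) → ℝ)
    (hdiff : ∀ i, Differentiable ℝ (f i))
    (hsc : ∀ i, ∀ x y : EuclideanSpace ℝ (Fin n),
      ⟪gradient (f i) x - gradient (f i) y, x - y⟫ ≥ μ * ‖x - y‖ ^ 2)
    (hlip : ∀ i, ∀ x y : EuclideanSpace ℝ (Fin n),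
      ‖gradient (f i) x - gradient (f i) y‖ ≤ L * ‖x - y‖)
    (F : EuclideanSpace ℝ (Fin n) → ℝ)
    (hF : F = fun x => (N : ℝ)⁻¹ * ∑ i, f i x)
    (xstar : EuclideanSpace ℝ (Fin n))
    (hxstar : ∀ y, F xstar ≤ F y)
    (xbar : EuclideanSpace ℝ (Fin n))
    (φ : Fin N → Fin τ → EuclideanSpace ℝ (Fin n)) :
    -(2 * γ / N) * ∑ i, ∑ t, ⟪xbar - xstar, gradient (f i) (φ i t)⟫ ≤
      -(2 * γ * τ) * (F xbar - F xstar)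
        - (μ * τ * γ / 2) * ‖xbar - xstar‖ ^ 2
        + (2 * γ * L / N) * ∑ i, ∑ t, ‖φ i t - xbar‖ ^ 2 := by
  have hL : (0 : ℝ) ≤ L := le_trans hμ.le hμL
  have hNR : (0 : ℝ) < N := by exact_mod_cast hN
  have key : ∀ i t, f i xbar - f i xstar + μ / 4 * ‖xbar - xstar‖ ^ 2
      - L * ‖φ i t - xbar‖ ^ 2 ≤ ⟪xbar - xstar, gradient (f i) (φ i t)⟫ := by
    intro i t
    set p := φ i t
    set g := gradient (f i) p with hgd
    have h1 := sc_lower (f i) (hdiff i) μ (hsc i) p xstar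
    have h2 := smooth_upper (f i) (hdiff i) L hL (hlip i) p xbar
    rw [← hgd] at h1 h2
    have h3 : ⟪g, xbar - p⟫ - ⟪g, xstar - p⟫ = ⟪g, xbar - xstar⟫ := by
      rw [← inner_sub_right]
      congr 1
      abel
    have hexp : ‖xstar - p‖ ^ 2
        = ‖xbar - p‖ ^ 2 - 2 * ⟪xbar - p, xbar - xstar⟫ + ‖xbar - xstar‖ ^ 2 := by
      have he : xstar - p = (xbar - p) - (xbar - xstar) := by abel
      rw [he]
      exact norm_sub_sq_real _ _
    have hcs := real_inner_le_norm (xbar - p) (xbar - xstar)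
    have h4 : ‖xbar - xstar‖ ^ 2 / 2 - ‖xbar - p‖ ^ 2 ≤ ‖xstar - p‖ ^ 2 := by
      nlinarith [sq_nonneg (2 * ‖xbar - p‖ - ‖xbar - xstar‖)]
    have h5 : ‖xbar - p‖ ^ 2 = ‖p - xbar‖ ^ 2 := by rw [norm_sub_rev]
    have h6 : ⟪xbar - xstar, g⟫ = ⟪g, xbar - xstar⟫ := real_inner_comm _ _
    rw [h6]
    have h7 := mul_le_mul_of_nonneg_left h4 (by positivity : (0:ℝ) ≤ μ / 2)
    have h8 := mul_le_mul_of_nonneg_right hμL (sq_nonneg ‖xbar - p‖)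
    nlinarith [h1, h2, h3, h5, h7, h8]
  set A := ∑ i, ∑ t : Fin τ, ⟪xbar - xstar, gradient (f i) (φ i t)⟫ with hA
  set B := ∑ i, ∑ t : Fin τ, ‖φ i t - xbar‖ ^ 2 with hB
  set Q := ‖xbar - xstar‖ ^ 2 with hQ
  have hsum : ∑ i, ∑ t : Fin τ, (f i xbar - f i xstar + μ / 4 * Q - L * ‖φ i t - xbar‖ ^ 2)
      ≤ A := by
    apply Finset.sum_le_sum
    intro i _
    exact Finset.sum_le_sum fun t _ => key i t
  have hS : ∑ i, (f i xbar - f i xstar) = (N : ℝ) * (F xbar - F xstar) := by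
    subst hF
    rw [Finset.sum_sub_distrib]
    field_simp
  have hexpand : ∑ i, ∑ t : Fin τ, (f i xbar - f i xstar + μ / 4 * Q - L * ‖φ i t - xbar‖ ^ 2)
      = (τ : ℝ) * ((N : ℝ) * (F xbar - F xstar)) + (N : ℝ) * ((τ : ℝ) * (μ / 4 * Q)) - L * B := by
    have h1 : ∀ i : Fin N, ∑ t : Fin τ,
        (f i xbar - f i xstar + μ / 4 * Q - L * ‖φ i t - xbar‖ ^ 2)
        = (τ : ℝ) * (f i xbar - f i xstar) + (τ : ℝ) * (μ / 4 * Q)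
          - L * ∑ t : Fin τ, ‖φ i t - xbar‖ ^ 2 := by
      intro i
      rw [Finset.sum_sub_distrib, Finset.sum_add_distrib, Finset.sum_const, Finset.sum_const,
        ← Finset.mul_sum]
      simp [nsmul_eq_mul]
    rw [Finset.sum_congr rfl (fun i _ => h1 i), Finset.sum_sub_distrib, Finset.sum_add_distrib,
      Finset.sum_const, ← Finset.mul_sum, ← Finset.mul_sum, hS, hB]
    simp [nsmul_eq_mul]
  rw [hexpand] at hsum
  have hc : (0 : ℝ) ≤ 2 * γ / N := by positivity
  have h7 := mul_le_mul_of_nonneg_left hsum hc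
  have h8 : -(2 * γ / N) * A ≤ -(2 * γ / N) *
      ((τ : ℝ) * ((N : ℝ) * (F xbar - F xstar)) + (N : ℝ) * ((τ : ℝ) * (μ / 4 * Q)) - L * B) := by
    linarith
  refine le_trans h8 (le_of_eq ?_)
  field_simp
  ring
end

section
/- Let f_1,…,f_m : ℝ^n → ℝ each be L-smooth (each ∇f_h is L-Lipschitz) and set f = (1/m) Σ_{h=1}^m f_h. Fix φ, r_1,…,r_m, x̄ ∈ ℝ^n, let s be a random index uniformly distributed on {1,…,m}, and define the SAGA gradient estimator g = ∇f_s(φ) − ∇f_s(r_s) + (1/m) Σ_{h=1}^m ∇f_h(r_h). Then E[‖g − ∇f(φ)‖²] ≤ 2L² ‖φ − x̄‖² + (2L²/m) Σ_{h=1}^m ‖r_h − x̄‖². -/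
open MeasureTheory
open scoped BigOperators

section Aux

variable {E : Type*} [NormedAddCommGroup E] [InnerProductSpace ℝ E]

lemma stmt6_var_le {m : ℕ} (hm : 0 < m) (v : Fin m → E) :
    ∑ j, ‖v j - (m : ℝ)⁻¹ • ∑ i, v i‖ ^ 2 ≤ ∑ j, ‖v j‖ ^ 2 := by
  set μ : E := (m : ℝ)⁻¹ • ∑ i, v i with hμ
  have hm' : (m : ℝ) ≠ 0 := Nat.cast_ne_zero.mpr hm.ne'
  have hS : ∑ i, v i = (m : ℝ) • μ := by
    rw [hμ, smul_smul, mul_inv_cancel₀ hm', one_smul]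
  have hinner : ∑ j, inner ℝ (v j) μ = (m : ℝ) * ‖μ‖ ^ 2 := by
    rw [← sum_inner, hS, real_inner_smul_left, real_inner_self_eq_norm_sq]
  have hexp : ∑ j, ‖v j - μ‖ ^ 2
      = ∑ j, ‖v j‖ ^ 2 - 2 * (∑ j, inner ℝ (v j) μ) + (m : ℝ) * ‖μ‖ ^ 2 := by
    simp only [norm_sub_sq_real]
    rw [Finset.sum_add_distrib, Finset.sum_sub_distrib, Finset.sum_const,
      Finset.card_univ, Fintype.card_fin, nsmul_eq_mul, ← Finset.mul_sum]
  rw [hinner] at hexp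
  have h0 : 0 ≤ (m : ℝ) * ‖μ‖ ^ 2 := by positivity
  nlinarith [hexp]

lemma stmt6_two_sq (a b : E) : ‖a - b‖ ^ 2 ≤ 2 * ‖a‖ ^ 2 + 2 * ‖b‖ ^ 2 := by
  have h := norm_sub_le a b
  nlinarith [norm_nonneg a, norm_nonneg b, norm_nonneg (a - b), sq_nonneg (‖a‖ - ‖b‖)]

end Aux

/-- Variance bound for the SAGA gradient estimator
`g = ∇f_s(φ) − ∇f_s(r_s) + (1/m) Σ_h ∇f_h(r_h)` with `s` uniform on `{1,…,m}` and each
`f_h` `L`-smooth: `E[‖g − ∇f(φ)‖²] ≤ 2L²‖φ − x̄‖² + (2L²/m) Σ_h ‖r_h − x̄‖²`. -/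
theorem stmt6 (n m : ℕ) (hm : 0 < m) (L : ℝ)
    (f : Fin m → EuclideanSpace ℝ (Fin n) → ℝ)
    (hdiff : ∀ h, Differentiable ℝ (f h))
    (hlip : ∀ h, ∀ x y : EuclideanSpace ℝ (Fin n),
      ‖gradient (f h) x - gradient (f h) y‖ ≤ L * ‖x - y‖)
    (φ xbar : EuclideanSpace ℝ (Fin n)) (r : Fin m → EuclideanSpace ℝ (Fin n))
    {Ω : Type*} [MeasurableSpace Ω] (P : Measure Ω) [IsProbabilityMeasure P]
    (s : Ω → Fin m) (hs_meas : Measurable s)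
    (hs_unif : ∀ j : Fin m, P (s ⁻¹' {j}) = (m : ENNReal)⁻¹)
    (g : Ω → EuclideanSpace ℝ (Fin n))
    (hg : g = fun ω => gradient (f (s ω)) φ - gradient (f (s ω)) (r (s ω))
      + (m : ℝ)⁻¹ • ∑ h, gradient (f h) (r h)) :
    ∫ ω, ‖g ω - gradient (fun x => (m : ℝ)⁻¹ * ∑ h, f h x) φ‖ ^ 2 ∂P ≤
      2 * L ^ 2 * ‖φ - xbar‖ ^ 2 + (2 * L ^ 2 / m) * ∑ h, ‖r h - xbar‖ ^ 2 := by
  classical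
  have hm' : (m : ℝ) ≠ 0 := Nat.cast_ne_zero.mpr hm.ne'
  -- gradient of the average
  have hgradf : gradient (fun x : EuclideanSpace ℝ (Fin n) => (m : ℝ)⁻¹ * ∑ h, f h x) φ
      = (m : ℝ)⁻¹ • ∑ h, gradient (f h) φ := by
    apply HasGradientAt.gradient
    rw [hasGradientAt_iff_hasFDerivAt]
    have : (InnerProductSpace.toDual ℝ (EuclideanSpace ℝ (Fin n))) ((m : ℝ)⁻¹ • ∑ h, gradient (f h) φ)
        = (m : ℝ)⁻¹ • ∑ h, (InnerProductSpace.toDual ℝ (EuclideanSpace ℝ (Fin n))) (gradient (f h) φ) := by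
      rw [_root_.map_smul, map_sum]
    rw [this]
    exact HasFDerivAt.const_mul
      (HasFDerivAt.fun_sum fun h _ => ((hdiff h φ).hasGradientAt).hasFDerivAt) _
  set v : Fin m → EuclideanSpace ℝ (Fin n) := fun j => gradient (f j) φ - gradient (f j) (r j) with hv
  set μ : EuclideanSpace ℝ (Fin n) := (m : ℝ)⁻¹ • ∑ i, v i with hμ
  -- g ω − ∇f(φ) = v (s ω) − μ
  have hkey : ∀ ω, g ω - gradient (fun x : EuclideanSpace ℝ (Fin n) => (m : ℝ)⁻¹ * ∑ h, f h x) φ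
      = v (s ω) - μ := by
    intro ω
    rw [hg, hgradf, hμ, hv]
    simp only [Finset.smul_sum, smul_sub]
    rw [Finset.sum_sub_distrib]
    abel
  simp only [hkey]
  -- rewrite the integral as a finite sum
  have hmap : ∫ ω, ‖v (s ω) - μ‖ ^ 2 ∂P = ∫ j, ‖v j - μ‖ ^ 2 ∂(P.map s) := by
    rw [integral_map hs_meas.aemeasurable]
    exact (measurable_of_finite _).aestronglyMeasurable
  have hfin : ∫ j, ‖v j - μ‖ ^ 2 ∂(P.map s)
      = ∑ j, ((P.map s) {j}).toReal • ‖v j - μ‖ ^ 2 := by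
    apply integral_fintype
    exact .of_finite
  have hwt : ∀ j : Fin m, ((P.map s) {j}).toReal = (m : ℝ)⁻¹ := by
    intro j
    rw [Measure.map_apply hs_meas (measurableSet_singleton j), hs_unif j]
    simp
  rw [hmap, hfin]
  simp only [hwt, smul_eq_mul]
  rw [← Finset.mul_sum]
  -- variance bound + Lipschitz bound
  have h1 : ∑ j, ‖v j - μ‖ ^ 2 ≤ ∑ j, ‖v j‖ ^ 2 := stmt6_var_le hm v
  have h2 : ∑ j, ‖v j‖ ^ 2
      ≤ ∑ j : Fin m, (2 * L ^ 2 * ‖φ - xbar‖ ^ 2 + 2 * L ^ 2 * ‖r j - xbar‖ ^ 2) := by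
    apply Finset.sum_le_sum
    intro j _
    have hvj : v j = (gradient (f j) φ - gradient (f j) xbar)
        - (gradient (f j) (r j) - gradient (f j) xbar) := by rw [hv]; abel
    have ha : ‖gradient (f j) φ - gradient (f j) xbar‖ ^ 2 ≤ L ^ 2 * ‖φ - xbar‖ ^ 2 := by
      have := hlip j φ xbar
      nlinarith [norm_nonneg (gradient (f j) φ - gradient (f j) xbar)]
    have hb : ‖gradient (f j) (r j) - gradient (f j) xbar‖ ^ 2
        ≤ L ^ 2 * ‖r j - xbar‖ ^ 2 := by
      have := hlip j (r j) xbar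
      nlinarith [norm_nonneg (gradient (f j) (r j) - gradient (f j) xbar)]
    calc ‖v j‖ ^ 2 ≤ 2 * ‖gradient (f j) φ - gradient (f j) xbar‖ ^ 2
          + 2 * ‖gradient (f j) (r j) - gradient (f j) xbar‖ ^ 2 := by
          rw [hvj]; exact stmt6_two_sq _ _
      _ ≤ 2 * L ^ 2 * ‖φ - xbar‖ ^ 2 + 2 * L ^ 2 * ‖r j - xbar‖ ^ 2 := by nlinarith
  have h3 : (m : ℝ)⁻¹ * ∑ j, ‖v j - μ‖ ^ 2
      ≤ (m : ℝ)⁻¹ * ∑ j : Fin m, (2 * L ^ 2 * ‖φ - xbar‖ ^ 2 + 2 * L ^ 2 * ‖r j - xbar‖ ^ 2) := by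
    apply mul_le_mul_of_nonneg_left (h1.trans h2)
    positivity
  refine h3.trans_eq ?_
  rw [Finset.sum_add_distrib, Finset.sum_const, Finset.card_univ, Fintype.card_fin,
    nsmul_eq_mul, ← Finset.mul_sum]
  field_simp
end

section
/- Let p ≥ 1 and z₁, z₂ ∈ ℝ^n. Let A, B, D be mutually independent square-integrable random vectors in ℝ^n satisfying E[A] = z₁, E[B] = z₂, E[D] = z₁ − z₂, and E[‖A‖²] ≤ p‖z₁‖², E[‖B‖²] ≤ p‖z₂‖², E[‖D‖²] ≤ p‖z₁ − z₂‖². Then E[‖D − (A − B)‖²] ≤ (3/2)(p − 1)‖z₁ − z₂‖² + ((p − 1)/2)‖z₁ + z₂‖². -/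
open MeasureTheory

section Aux

variable {Ω : Type*} [MeasurableSpace Ω] {P : Measure Ω} [IsProbabilityMeasure P] {n : ℕ}

lemma aux_int_inner {X Y : Ω → EuclideanSpace ℝ (Fin n)}
    (hX : MemLp X 2 P) (hY : MemLp Y 2 P) :
    Integrable (fun ω => (inner ℝ (X ω) (Y ω) : ℝ)) P := by
  have hXn : Integrable (fun ω => ‖X ω‖ ^ 2) P :=
    (memLp_two_iff_integrable_sq_norm hX.1).mp hX
  have hYn : Integrable (fun ω => ‖Y ω‖ ^ 2) P :=
    (memLp_two_iff_integrable_sq_norm hY.1).mp hY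
  refine Integrable.mono' (((hXn.add hYn).div_const 2)) (hX.1.inner hY.1) ?_
  filter_upwards with ω
  have h1 : |(inner ℝ (X ω) (Y ω) : ℝ)| ≤ ‖X ω‖ * ‖Y ω‖ := abs_real_inner_le_norm _ _
  have h2 : ‖X ω‖ * ‖Y ω‖ ≤ (‖X ω‖ ^ 2 + ‖Y ω‖ ^ 2) / 2 := by nlinarith [sq_nonneg (‖X ω‖ - ‖Y ω‖)]
  simpa [Real.norm_eq_abs] using h1.trans h2

lemma aux_coord_int {X : Ω → EuclideanSpace ℝ (Fin n)} (hX : MemLp X 2 P) (i : Fin n) :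
    ∫ ω, X ω i ∂P = (∫ ω, X ω ∂P) i := by
  have := (EuclideanSpace.proj i (𝕜 := ℝ)).integral_comp_comm
    (hX.integrable (by norm_num))
  simpa using this

lemma aux_indep_inner {X Y : Ω → EuclideanSpace ℝ (Fin n)}
    (hX : MemLp X 2 P) (hY : MemLp Y 2 P)
    (h : ProbabilityTheory.IndepFun X Y P) :
    ∫ ω, (inner ℝ (X ω) (Y ω) : ℝ) ∂P = (inner ℝ (∫ ω, X ω ∂P) (∫ ω, Y ω ∂P) : ℝ) := by
  have hmul : ∀ i : Fin n, Integrable (fun ω => X ω i * Y ω i) P := by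
    intro i
    have hXi : MemLp (fun ω => X ω i) 2 P :=
      (EuclideanSpace.proj i (𝕜 := ℝ)).comp_memLp' hX
    have hYi : MemLp (fun ω => Y ω i) 2 P :=
      (EuclideanSpace.proj i (𝕜 := ℝ)).comp_memLp' hY
    have h1 : Integrable (fun ω => (X ω i + Y ω i) ^ 2) P := (hXi.add hYi).integrable_sq
    have h2 : Integrable (fun ω => (X ω i) ^ 2) P := hXi.integrable_sq
    have h3 : Integrable (fun ω => (Y ω i) ^ 2) P := hYi.integrable_sq
    have : Integrable (fun ω => ((X ω i + Y ω i) ^ 2 - (X ω i) ^ 2 - (Y ω i) ^ 2) / 2) P :=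
      ((h1.sub h2).sub h3).div_const 2
    convert this using 2 with ω
    ring
  have key : ∀ i : Fin n, ∫ ω, X ω i * Y ω i ∂P = (∫ ω, X ω ∂P) i * (∫ ω, Y ω ∂P) i := by
    intro i
    have hind : ProbabilityTheory.IndepFun (fun ω => X ω i) (fun ω => Y ω i) P :=
      h.comp (φ := fun x : EuclideanSpace ℝ (Fin n) => x i) (ψ := fun x : EuclideanSpace ℝ (Fin n) => x i)
        (EuclideanSpace.proj i (𝕜 := ℝ)).continuous.measurable (EuclideanSpace.proj i (𝕜 := ℝ)).continuous.measurable
    have hXm : AEStronglyMeasurable (fun ω => X ω i) P :=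
      ((EuclideanSpace.proj i (𝕜 := ℝ)).continuous.comp_aestronglyMeasurable hX.1)
    have hYm : AEStronglyMeasurable (fun ω => Y ω i) P :=
      ((EuclideanSpace.proj i (𝕜 := ℝ)).continuous.comp_aestronglyMeasurable hY.1)
    have hm := hind.integral_mul_eq_mul_integral hXm hYm
    calc ∫ ω, X ω i * Y ω i ∂P = (∫ ω, X ω i ∂P) * ∫ ω, Y ω i ∂P := hm
      _ = (∫ ω, X ω ∂P) i * (∫ ω, Y ω ∂P) i := by
          rw [aux_coord_int hX, aux_coord_int hY]
  calc ∫ ω, (inner ℝ (X ω) (Y ω) : ℝ) ∂P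
      = ∫ ω, ∑ i, X ω i * Y ω i ∂P := by
        refine integral_congr_ae (Filter.Eventually.of_forall fun ω => ?_)
        simp [PiLp.inner_apply, RCLike.inner_apply, mul_comm]
    _ = ∑ i, ∫ ω, X ω i * Y ω i ∂P := integral_finset_sum _ (fun i _ => hmul i)
    _ = ∑ i, (∫ ω, X ω ∂P) i * (∫ ω, Y ω ∂P) i := by simp_rw [key]
    _ = (inner ℝ (∫ ω, X ω ∂P) (∫ ω, Y ω ∂P) : ℝ) := by
        simp [PiLp.inner_apply, RCLike.inner_apply, mul_comm]

end Aux

/-- For mutually independent, unbiased, `p`-bounded compressions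
`A, B, D` of `z₁`, `z₂`, `z₁ − z₂` respectively:
`E[‖D − (A − B)‖²] ≤ (3/2)(p − 1)‖z₁ − z₂‖² + ((p − 1)/2)‖z₁ + z₂‖²`. -/
theorem stmt8 (n : ℕ) (p : ℝ) (hp : 1 ≤ p)
    (z₁ z₂ : EuclideanSpace ℝ (Fin n))
    {Ω : Type*} [MeasurableSpace Ω] (P : Measure Ω) [IsProbabilityMeasure P]
    (A B D : Ω → EuclideanSpace ℝ (Fin n))
    (hA2 : MemLp A 2 P) (hB2 : MemLp B 2 P) (hD2 : MemLp D 2 P)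
    (hindep : ProbabilityTheory.iIndepFun ![A, B, D] P)
    (hAmean : ∫ ω, A ω ∂P = z₁) (hBmean : ∫ ω, B ω ∂P = z₂)
    (hDmean : ∫ ω, D ω ∂P = z₁ - z₂)
    (hAsq : ∫ ω, ‖A ω‖ ^ 2 ∂P ≤ p * ‖z₁‖ ^ 2)
    (hBsq : ∫ ω, ‖B ω‖ ^ 2 ∂P ≤ p * ‖z₂‖ ^ 2)
    (hDsq : ∫ ω, ‖D ω‖ ^ 2 ∂P ≤ p * ‖z₁ - z₂‖ ^ 2) :
    ∫ ω, ‖D ω - (A ω - B ω)‖ ^ 2 ∂P ≤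
      (3 / 2) * (p - 1) * ‖z₁ - z₂‖ ^ 2 + ((p - 1) / 2) * ‖z₁ + z₂‖ ^ 2 := by
  have hAB : ProbabilityTheory.IndepFun A B P := by
    have := hindep.indepFun (i := 0) (j := 1) (by decide)
    simpa using this
  have hDA : ProbabilityTheory.IndepFun D A P := by
    have := hindep.indepFun (i := 2) (j := 0) (by decide)
    simpa using this
  have hDB : ProbabilityTheory.IndepFun D B P := by
    have := hindep.indepFun (i := 2) (j := 1) (by decide)
    simpa using this
  have hIA : Integrable (fun ω => ‖A ω‖ ^ 2) P := (memLp_two_iff_integrable_sq_norm hA2.1).mp hA2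
  have hIB : Integrable (fun ω => ‖B ω‖ ^ 2) P := (memLp_two_iff_integrable_sq_norm hB2.1).mp hB2
  have hID : Integrable (fun ω => ‖D ω‖ ^ 2) P := (memLp_two_iff_integrable_sq_norm hD2.1).mp hD2
  have hiDA : Integrable (fun ω => (inner ℝ (D ω) (A ω) : ℝ)) P := aux_int_inner hD2 hA2
  have hiDB : Integrable (fun ω => (inner ℝ (D ω) (B ω) : ℝ)) P := aux_int_inner hD2 hB2
  have hiAB : Integrable (fun ω => (inner ℝ (A ω) (B ω) : ℝ)) P := aux_int_inner hA2 hB2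
  have expand : ∀ ω, ‖D ω - (A ω - B ω)‖ ^ 2 =
      ‖D ω‖ ^ 2 + ‖A ω‖ ^ 2 + ‖B ω‖ ^ 2 - 2 * (inner ℝ (D ω) (A ω) : ℝ)
        + 2 * (inner ℝ (D ω) (B ω) : ℝ) - 2 * (inner ℝ (A ω) (B ω) : ℝ) := by
    intro ω
    rw [norm_sub_sq_real, norm_sub_sq_real, inner_sub_right]
    ring
  have hsplit : ∫ ω, ‖D ω - (A ω - B ω)‖ ^ 2 ∂P =
      (∫ ω, ‖D ω‖ ^ 2 ∂P) + (∫ ω, ‖A ω‖ ^ 2 ∂P) + (∫ ω, ‖B ω‖ ^ 2 ∂P)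
        - 2 * ∫ ω, (inner ℝ (D ω) (A ω) : ℝ) ∂P
        + 2 * ∫ ω, (inner ℝ (D ω) (B ω) : ℝ) ∂P
        - 2 * ∫ ω, (inner ℝ (A ω) (B ω) : ℝ) ∂P := by
    simp_rw [expand]
    have I1 : Integrable (fun ω => ‖D ω‖ ^ 2 + ‖A ω‖ ^ 2) P := hID.add hIA
    have I2 : Integrable (fun ω => ‖D ω‖ ^ 2 + ‖A ω‖ ^ 2 + ‖B ω‖ ^ 2) P := I1.add hIB
    have J1 : Integrable (fun ω => 2 * (inner ℝ (D ω) (A ω) : ℝ)) P := hiDA.const_mul 2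
    have J2 : Integrable (fun ω => 2 * (inner ℝ (D ω) (B ω) : ℝ)) P := hiDB.const_mul 2
    have J3 : Integrable (fun ω => 2 * (inner ℝ (A ω) (B ω) : ℝ)) P := hiAB.const_mul 2
    have I3 : Integrable (fun ω => ‖D ω‖ ^ 2 + ‖A ω‖ ^ 2 + ‖B ω‖ ^ 2
        - 2 * (inner ℝ (D ω) (A ω) : ℝ)) P := I2.sub J1
    have I4 : Integrable (fun ω => ‖D ω‖ ^ 2 + ‖A ω‖ ^ 2 + ‖B ω‖ ^ 2
        - 2 * (inner ℝ (D ω) (A ω) : ℝ) + 2 * (inner ℝ (D ω) (B ω) : ℝ)) P := I3.add J2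
    rw [integral_sub I4 J3, integral_add I3 J2, integral_sub I2 J1, integral_add I1 hIB,
        integral_add hID hIA, integral_const_mul, integral_const_mul, integral_const_mul]
  have eDA : ∫ ω, (inner ℝ (D ω) (A ω) : ℝ) ∂P = (inner ℝ (z₁ - z₂) z₁ : ℝ) := by
    rw [aux_indep_inner hD2 hA2 hDA, hDmean, hAmean]
  have eDB : ∫ ω, (inner ℝ (D ω) (B ω) : ℝ) ∂P = (inner ℝ (z₁ - z₂) z₂ : ℝ) := by
    rw [aux_indep_inner hD2 hB2 hDB, hDmean, hBmean]
  have eAB : ∫ ω, (inner ℝ (A ω) (B ω) : ℝ) ∂P = (inner ℝ z₁ z₂ : ℝ) := by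
    rw [aux_indep_inner hA2 hB2 hAB, hAmean, hBmean]
  rw [hsplit, eDA, eDB, eAB]
  have e1 : ‖z₁ - z₂‖ ^ 2 = ‖z₁‖ ^ 2 - 2 * (inner ℝ z₁ z₂ : ℝ) + ‖z₂‖ ^ 2 :=
    norm_sub_sq_real z₁ z₂
  have e2 : ‖z₁ + z₂‖ ^ 2 = ‖z₁‖ ^ 2 + 2 * (inner ℝ z₁ z₂ : ℝ) + ‖z₂‖ ^ 2 :=
    norm_add_sq_real z₁ z₂
  have e3 : (inner ℝ (z₁ - z₂) z₁ : ℝ) = ‖z₁‖ ^ 2 - (inner ℝ z₁ z₂ : ℝ) := by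
    rw [inner_sub_left, real_inner_self_eq_norm_sq, real_inner_comm z₂ z₁]
  have e4 : (inner ℝ (z₁ - z₂) z₂ : ℝ) = (inner ℝ z₁ z₂ : ℝ) - ‖z₂‖ ^ 2 := by
    rw [inner_sub_left, real_inner_self_eq_norm_sq]
  rw [e3, e4]
  nlinarith [hAsq, hBsq, hDsq, e1, e2]
end

section
/- Let η ∈ (0, 1], p ≥ 1, let a, b ∈ ℝ^n be deterministic vectors, and let e be a square-integrable random vector in ℝ^n with E[e] = 0 and E[‖e‖²] ≤ (p − 1)‖b‖². Then E[‖a + (1 − η)b + η e‖²] ≤ (1/η)‖a‖² + (1 − η + η²(p − 1))‖b‖². -/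
open MeasureTheory

/-- One-step error-feedback contraction: for `η ∈ (0,1]`, `p ≥ 1`,
deterministic `a, b` and a zero-mean error `e` with `E[‖e‖²] ≤ (p − 1)‖b‖²`,
`E[‖a + (1 − η)b + ηe‖²] ≤ (1/η)‖a‖² + (1 − η + η²(p − 1))‖b‖²`. -/
theorem stmt10 (n : ℕ) (η p : ℝ) (hη0 : 0 < η) (hη1 : η ≤ 1) (hp : 1 ≤ p)
    (a b : EuclideanSpace ℝ (Fin n))
    {Ω : Type*} [MeasurableSpace Ω] (P : Measure Ω) [IsProbabilityMeasure P]
    (e : Ω → EuclideanSpace ℝ (Fin n)) (he2 : MemLp e 2 P)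
    (hmean : ∫ ω, e ω ∂P = 0)
    (hvar : ∫ ω, ‖e ω‖ ^ 2 ∂P ≤ (p - 1) * ‖b‖ ^ 2) :
    ∫ ω, ‖a + (1 - η) • b + η • e ω‖ ^ 2 ∂P ≤
      (1 / η) * ‖a‖ ^ 2 + (1 - η + η ^ 2 * (p - 1)) * ‖b‖ ^ 2 := by
  set c := a + (1 - η) • b with hc
  have hint : Integrable e P := he2.integrable (by norm_num)
  have hsq : Integrable (fun ω => ‖e ω‖ ^ 2) P := by
    have h := he2.integrable_norm_rpow (by norm_num) (by norm_num)
    have h2 : (2 : ENNReal).toReal = (2 : ℝ) := by norm_num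
    rw [h2] at h
    have : ∀ ω, ‖e ω‖ ^ (2 : ℝ) = ‖e ω‖ ^ 2 := fun ω => by
      rw [← Real.rpow_natCast (‖e ω‖) 2]; norm_num
    simpa [this] using h
  have hInner : Integrable (fun ω => (inner ℝ c (e ω) : ℝ)) P := hint.const_inner c
  have hexp : ∀ ω, ‖c + η • e ω‖ ^ 2 =
      ‖c‖ ^ 2 + 2 * η * (inner ℝ c (e ω) : ℝ) + η ^ 2 * ‖e ω‖ ^ 2 := by
    intro ω
    rw [@norm_add_sq_real, norm_smul, real_inner_smul_right, Real.norm_eq_abs,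
      abs_of_pos hη0]
    ring
  have hIeq : ∫ ω, ‖c + η • e ω‖ ^ 2 ∂P =
      ‖c‖ ^ 2 + 2 * η * (inner ℝ c (∫ ω, e ω ∂P) : ℝ) + η ^ 2 * ∫ ω, ‖e ω‖ ^ 2 ∂P := by
    simp_rw [hexp]
    rw [integral_add
        (show Integrable (fun ω => ‖c‖ ^ 2 + 2 * η * (inner ℝ c (e ω) : ℝ)) P from
          (integrable_const _).add (hInner.const_mul _))
        (hsq.const_mul _),
      integral_add (integrable_const _) (hInner.const_mul _),
      integral_const, integral_const_mul, integral_const_mul, integral_inner hint]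
    simp
  rw [hIeq, hmean]
  have hc2 : ‖c‖ ^ 2 ≤ (1 / η) * ‖a‖ ^ 2 + (1 - η) * ‖b‖ ^ 2 := by
    have h1 : ‖c‖ ^ 2 = ‖a‖ ^ 2 + 2 * ((1 - η) * (inner ℝ a b : ℝ)) +
        (1 - η) ^ 2 * ‖b‖ ^ 2 := by
      rw [hc, @norm_add_sq_real, norm_smul, real_inner_smul_right, Real.norm_eq_abs,
        abs_of_nonneg (by linarith : (0:ℝ) ≤ 1 - η)]
      ring
    have h2 : (inner ℝ a b : ℝ) ≤ ‖a‖ * ‖b‖ := real_inner_le_norm a b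
    rw [h1, ← sub_nonneg]
    have expand : (1 / η) * ‖a‖ ^ 2 + (1 - η) * ‖b‖ ^ 2 -
        (‖a‖ ^ 2 + 2 * ((1 - η) * (inner ℝ a b : ℝ)) + (1 - η) ^ 2 * ‖b‖ ^ 2) =
        (1 / η) * ((1 - η) *
          ((‖a‖ - η * ‖b‖) ^ 2 + 2 * η * (‖a‖ * ‖b‖ - (inner ℝ a b : ℝ)))) := by
      field_simp
      ring
    rw [expand]
    exact mul_nonneg (by positivity) (mul_nonneg (by linarith)
      (add_nonneg (sq_nonneg _) (mul_nonneg (by positivity) (by linarith))))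
  have hv : η ^ 2 * ∫ ω, ‖e ω‖ ^ 2 ∂P ≤ η ^ 2 * ((p - 1) * ‖b‖ ^ 2) :=
    mul_le_mul_of_nonneg_left hvar (by positivity)
  simp only [inner_zero_right, mul_zero, add_zero]
  nlinarith
end

section
/- Let β, ρ, τ > 0 and λ̃ < 0 satisfy −ρλ̃βτ < 2, and consider the real 3×3 matrix M = [[1, βτ, 0], [ρλ̃, ρλ̃βτ + 1/2, −1/2], [0, −1/2, 1/2]], viewed as a matrix over ℂ. Then 0 is an eigenvalue of M with eigenvector (−βτ, 1, 1), and the remaining two eigenvalues of M are nonreal complex conjugates, each of modulus √(1 + ρλ̃βτ/2) < 1. In particular, every complex eigenvalue of M has modulus strictly less than 1. -/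
open Polynomial

/-- For `β, ρ, τ > 0`, `λ̃ < 0` with `−ρλ̃βτ < 2`, the matrix
`M = [[1, βτ, 0], [ρλ̃, ρλ̃βτ + 1/2, −1/2], [0, −1/2, 1/2]]` (over `ℂ`) has `0` as an
eigenvalue with eigenvector `(−βτ, 1, 1)`, its other two eigenvalues are nonreal complex
conjugates of modulus `√(1 + ρλ̃βτ/2) < 1`, and every complex eigenvalue of `M` has
modulus strictly less than `1`. -/
theorem stmt12 (β ρ τ lam : ℝ) (hβ : 0 < β) (hρ : 0 < ρ) (hτ : 0 < τ)
    (hlam : lam < 0) (hcond : -(ρ * lam * β * τ) < 2)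
    (M : Matrix (Fin 3) (Fin 3) ℂ)
    (hM : M = !![1, (β : ℂ) * (τ : ℂ), 0;
                 (ρ : ℂ) * (lam : ℂ),
                   (ρ : ℂ) * (lam : ℂ) * (β : ℂ) * (τ : ℂ) + 1 / 2, -(1 / 2);
                 0, -(1 / 2), 1 / 2]) :
    (M.mulVec ![-((β : ℂ) * (τ : ℂ)), 1, 1] = 0 ∧
      (![-((β : ℂ) * (τ : ℂ)), 1, 1] : Fin 3 → ℂ) ≠ 0) ∧
    (∃ z : ℂ, z.im ≠ 0 ∧
      M.charpoly = X * (X - C z) * (X - C ((starRingEnd ℂ) z)) ∧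
      ‖z‖ = Real.sqrt (1 + ρ * lam * β * τ / 2) ∧
      Real.sqrt (1 + ρ * lam * β * τ / 2) < 1) ∧
    (∀ w ∈ spectrum ℂ M, ‖w‖ < 1) := by
  set a : ℝ := ρ * lam * β * τ with ha_def
  have ha_neg : a < 0 := by
    have h1 : 0 < ρ * β * τ := by positivity
    nlinarith
  have ha_gt : -2 < a := by linarith
  set d : ℝ := -(a * (a + 2)) with hd_def
  have hd : 0 < d := by nlinarith
  set z : ℂ := ⟨(2 + a) / 2, Real.sqrt d / 2⟩ with hz_def
  have him : z.im ≠ 0 := by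
    have : 0 < Real.sqrt d / 2 := by positivity
    simpa [hz_def] using this.ne'
  have hnsq : Complex.normSq z = 1 + a / 2 := by
    rw [hz_def, Complex.normSq_mk]
    nlinarith [Real.mul_self_sqrt hd.le]
  have hs : z + (starRingEnd ℂ) z = 2 + (ρ : ℂ) * (lam : ℂ) * (β : ℂ) * (τ : ℂ) := by
    rw [Complex.add_conj]
    apply Complex.ext <;> simp [hz_def] <;> push_cast <;> ring
  have hp : z * (starRingEnd ℂ) z
      = 1 + (ρ : ℂ) * (lam : ℂ) * (β : ℂ) * (τ : ℂ) * (2 : ℂ)⁻¹ := by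
    rw [Complex.mul_conj, hnsq]
    push_cast [ha_def]
    ring
  have e1 : (C z : ℂ[X]) + C ((starRingEnd ℂ) z)
      = 2 + C (ρ:ℂ) * C (lam:ℂ) * C (β:ℂ) * C (τ:ℂ) := by
    rw [← C_add, hs]
    simp [map_add, map_mul, map_ofNat]
  have e2 : (C z : ℂ[X]) * C ((starRingEnd ℂ) z)
      = 1 + C (ρ:ℂ) * C (lam:ℂ) * C (β:ℂ) * C (τ:ℂ) * C ((2:ℂ)⁻¹) := by
    rw [← C_mul, hp]
    simp [map_add, map_mul]
  have hcp : M.charpoly = X * (X - C z) * (X - C ((starRingEnd ℂ) z)) := by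
    have hh : (C ((2:ℂ)⁻¹) : ℂ[X]) + C ((2:ℂ)⁻¹) = 1 := by
      rw [← map_add]; norm_num
    rw [hM, Matrix.charpoly, Matrix.det_fin_three]
    simp [Matrix.charmatrix_apply, Matrix.diagonal, map_add, map_mul, one_div]
    linear_combination (X - X^2) * hh + X^2 * e1 - X * e2
  have habs : ‖z‖ = Real.sqrt (1 + ρ * lam * β * τ / 2) := by
    rw [Complex.norm_def, hnsq, ← ha_def]
  have hlt : Real.sqrt (1 + ρ * lam * β * τ / 2) < 1 := by
    rw [Real.sqrt_lt' one_pos]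
    nlinarith
  refine ⟨⟨?_, ?_⟩, ⟨z, him, hcp, habs, hlt⟩, ?_⟩
  · funext i
    fin_cases i <;>
      simp [hM, Matrix.mulVec, dotProduct, Fin.sum_univ_three] <;> ring
  · intro h
    have := congrFun h 1
    simp at this
  · intro w hw
    have key : M.charpoly.eval w = 0 := by
      have h : M.charpoly.eval w = (Matrix.scalar (Fin 3) w - M).det := by
        rw [Matrix.charpoly, eval_det, Matrix.matPolyEquiv_charmatrix]
        simp
      rw [spectrum.mem_iff] at hw
      rw [h]
      by_contra hne
      apply hw
      rw [Matrix.isUnit_iff_isUnit_det]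
      have h2 : algebraMap ℂ (Matrix (Fin 3) (Fin 3) ℂ) w - M
          = Matrix.scalar (Fin 3) w - M := by congr 1
      rw [h2]
      exact isUnit_iff_ne_zero.mpr hne
    rw [hcp] at key
    simp only [eval_mul, eval_sub, eval_X, eval_C, mul_eq_zero] at key
    simp only [sub_eq_zero] at key
    have h3 : w = 0 ∨ w = z ∨ w = (starRingEnd ℂ) z := by tauto
    rcases h3 with h | h | h
    · simp [h]
    · rw [h, habs]; exact hlt
    · rw [h, Complex.norm_conj, habs]; exact hlt
end

section
/- Let β, γ > 0, T ≥ 0, and fix φ_1,…,φ_N, x̄ ∈ ℝ^n; set v = (1/N) Σ_{i=1}^N ∇f_i(x̄). Let Y ∈ ℝ^{Nn} and Ȳ = (γ/β)(1_N ⊗ v) ∈ ℝ^{Nn}. Let g_1,…,g_N be square-integrable random vectors in ℝ^n satisfying Σ_{i=1}^N E[‖g_i − ∇f_i(φ_i)‖²] ≤ 2L² Σ_{i=1}^N ‖φ_i − x̄‖² + 2L² T, and define q = β Y − γ (G − ∇F(X̄)) ∈ ℝ^{Nn}, where G = (g_1,…,g_N) and ∇F(X̄) = (∇f_1(x̄),…,∇f_N(x̄))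 are the stacked vectors. Then E[‖q‖²] ≤ 12 γ² L² Σ_{i=1}^N ‖φ_i − x̄‖² + 4 γ² N ‖v‖² + 4 β² ‖Y − Ȳ‖² + 8 γ² L² T. -/
set_option maxHeartbeats 1000000


open MeasureTheory
open scoped BigOperators

private lemma four_sq {E : Type*} [SeminormedAddCommGroup E] (a b c d : E) :
    ‖a + b - c - d‖ ^ 2 ≤ 4 * (‖a‖ ^ 2 + ‖b‖ ^ 2 + ‖c‖ ^ 2 + ‖d‖ ^ 2) := by
  have h1 : ‖a + b - c - d‖ ≤ ‖a‖ + ‖b‖ + ‖c‖ + ‖d‖ := by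
    calc ‖a + b - c - d‖ ≤ ‖a + b - c‖ + ‖d‖ := norm_sub_le _ _
      _ ≤ ‖a + b‖ + ‖c‖ + ‖d‖ := by gcongr; exact norm_sub_le _ _
      _ ≤ ‖a‖ + ‖b‖ + ‖c‖ + ‖d‖ := by gcongr; exact norm_add_le _ _
  nlinarith [norm_nonneg (a + b - c - d), norm_nonneg a, norm_nonneg b, norm_nonneg c,
    norm_nonneg d, sq_nonneg (‖a‖ - ‖b‖), sq_nonneg (‖a‖ - ‖c‖), sq_nonneg (‖a‖ - ‖d‖),
    sq_nonneg (‖b‖ - ‖c‖), sq_nonneg (‖b‖ - ‖d‖), sq_nonneg (‖c‖ - ‖d‖)]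

/-- With `v = (1/N) Σ_i ∇f_i(x̄)`, `Ȳ = (γ/β)(1_N ⊗ v)`, stochastic
gradients `g_i` satisfying the variance bound
`Σ_i E[‖g_i − ∇f_i(φ_i)‖²] ≤ 2L² Σ_i ‖φ_i − x̄‖² + 2L²T`, and
`q = βY − γ(G − ∇F(X̄))` the stacked vector with components
`q_i = βY_i − γ(g_i − ∇f_i(x̄))`, it holds that
`E[‖q‖²] ≤ 12γ²L² Σ_i ‖φ_i − x̄‖² + 4γ²N‖v‖² + 4β²‖Y − Ȳ‖² + 8γ²L²T`. -/
theorem stmt14 (n N : ℕ) (hN : 0 < N) (β γ L T : ℝ)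
    (hβ : 0 < β) (hγ : 0 < γ) (hT : 0 ≤ T)
    (f : Fin N → EuclideanSpace ℝ (Fin n) → ℝ)
    (hdiff : ∀ i, Differentiable ℝ (f i))
    (hlip : ∀ i, ∀ x y : EuclideanSpace ℝ (Fin n),
      ‖gradient (f i) x - gradient (f i) y‖ ≤ L * ‖x - y‖)
    (φ : Fin N → EuclideanSpace ℝ (Fin n)) (xbar : EuclideanSpace ℝ (Fin n))
    (v : EuclideanSpace ℝ (Fin n))
    (hv : v = (N : ℝ)⁻¹ • ∑ i, gradient (f i) xbar)
    (Y Ybar : PiLp 2 (fun _ : Fin N => EuclideanSpace ℝ (Fin n)))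
    (hYbar : ∀ i, Ybar i = (γ / β) • v)
    {Ω : Type*} [MeasurableSpace Ω] (P : Measure Ω) [IsProbabilityMeasure P]
    (g : Fin N → Ω → EuclideanSpace ℝ (Fin n))
    (hg2 : ∀ i, MemLp (g i) 2 P)
    (hvar : ∑ i, ∫ ω, ‖g i ω - gradient (f i) (φ i)‖ ^ 2 ∂P ≤
      2 * L ^ 2 * ∑ i, ‖φ i - xbar‖ ^ 2 + 2 * L ^ 2 * T)
    (q : Ω → PiLp 2 (fun _ : Fin N => EuclideanSpace ℝ (Fin n)))
    (hq : ∀ ω i, q ω i = β • Y i - γ • (g i ω - gradient (f i) xbar)) :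
    ∫ ω, ‖q ω‖ ^ 2 ∂P ≤
      12 * γ ^ 2 * L ^ 2 * ∑ i, ‖φ i - xbar‖ ^ 2
        + 4 * γ ^ 2 * N * ‖v‖ ^ 2
        + 4 * β ^ 2 * ‖Y - Ybar‖ ^ 2
        + 8 * γ ^ 2 * L ^ 2 * T := by
  set S := ∑ i, ‖φ i - xbar‖ ^ 2 with hS
  set C₀ := 4 * γ ^ 2 * L ^ 2 * S + 4 * γ ^ 2 * N * ‖v‖ ^ 2 + 4 * β ^ 2 * ‖Y - Ybar‖ ^ 2
    with hC₀
  -- integrability of the per-coordinate variance integrands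
  have hint : ∀ i : Fin N,
      Integrable (fun ω => ‖g i ω - gradient (f i) (φ i)‖ ^ 2) P := by
    intro i
    have h2 : MemLp (fun ω => g i ω - gradient (f i) (φ i)) 2 P :=
      (hg2 i).sub (memLp_const _)
    exact (memLp_two_iff_integrable_sq_norm h2.aestronglyMeasurable).mp h2
  have hBint : Integrable
      (fun ω => C₀ + 4 * γ ^ 2 * ∑ i, ‖g i ω - gradient (f i) (φ i)‖ ^ 2) P := by
    refine (integrable_const _).add ?_
    exact ((integrable_finset_sum _ fun i _ => hint i).const_mul _)
  -- pointwise bound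
  have hkey : ∀ ω, ‖q ω‖ ^ 2 ≤
      C₀ + 4 * γ ^ 2 * ∑ i, ‖g i ω - gradient (f i) (φ i)‖ ^ 2 := by
    intro ω
    have hnq : ‖q ω‖ ^ 2 = ∑ i, ‖q ω i‖ ^ 2 := PiLp.norm_sq_eq_of_L2 _ (q ω)
    have hnY : ‖Y - Ybar‖ ^ 2 = ∑ i, ‖Y i - Ybar i‖ ^ 2 := by
      rw [PiLp.norm_sq_eq_of_L2]
      rfl
    have hbd : ∀ i : Fin N, ‖q ω i‖ ^ 2 ≤
        4 * (β ^ 2 * ‖Y i - Ybar i‖ ^ 2 + γ ^ 2 * ‖v‖ ^ 2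
          + γ ^ 2 * ‖g i ω - gradient (f i) (φ i)‖ ^ 2
          + γ ^ 2 * L ^ 2 * ‖φ i - xbar‖ ^ 2) := by
      intro i
      have hb : β • Ybar i = γ • v := by
        rw [hYbar, smul_smul]
        congr 1
        field_simp
      have hdec : q ω i = β • (Y i - Ybar i) + β • Ybar i
          - γ • (g i ω - gradient (f i) (φ i))
          - γ • (gradient (f i) (φ i) - gradient (f i) xbar) := by
        rw [hq]
        module
      have h4 := four_sq (β • (Y i - Ybar i)) (β • Ybar i)
        (γ • (g i ω - gradient (f i) (φ i)))
        (γ • (gradient (f i) (φ i) - gradient (f i) xbar))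
      rw [← hdec, hb] at h4
      have e1 : ‖β • (Y i - Ybar i)‖ ^ 2 = β ^ 2 * ‖Y i - Ybar i‖ ^ 2 := by
        rw [norm_smul, mul_pow, Real.norm_eq_abs, sq_abs]
      have e2 : ‖γ • v‖ ^ 2 = γ ^ 2 * ‖v‖ ^ 2 := by
        rw [norm_smul, mul_pow, Real.norm_eq_abs, sq_abs]
      have e3 : ‖γ • (g i ω - gradient (f i) (φ i))‖ ^ 2
          = γ ^ 2 * ‖g i ω - gradient (f i) (φ i)‖ ^ 2 := by
        rw [norm_smul, mul_pow, Real.norm_eq_abs, sq_abs]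
      have e4 : ‖γ • (gradient (f i) (φ i) - gradient (f i) xbar)‖ ^ 2
          = γ ^ 2 * ‖gradient (f i) (φ i) - gradient (f i) xbar‖ ^ 2 := by
        rw [norm_smul, mul_pow, Real.norm_eq_abs, sq_abs]
      have hl := hlip i (φ i) xbar
      have hl2 : ‖gradient (f i) (φ i) - gradient (f i) xbar‖ ^ 2
          ≤ L ^ 2 * ‖φ i - xbar‖ ^ 2 := by
        nlinarith [norm_nonneg (gradient (f i) (φ i) - gradient (f i) xbar),
          norm_nonneg (φ i - xbar)]
      have hl3 : γ ^ 2 * ‖gradient (f i) (φ i) - gradient (f i) xbar‖ ^ 2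
          ≤ γ ^ 2 * (L ^ 2 * ‖φ i - xbar‖ ^ 2) :=
        mul_le_mul_of_nonneg_left hl2 (sq_nonneg γ)
      rw [e1, e2, e3, e4] at h4
      linarith
    calc ‖q ω‖ ^ 2 = ∑ i, ‖q ω i‖ ^ 2 := hnq
      _ ≤ ∑ i, 4 * (β ^ 2 * ‖Y i - Ybar i‖ ^ 2 + γ ^ 2 * ‖v‖ ^ 2
          + γ ^ 2 * ‖g i ω - gradient (f i) (φ i)‖ ^ 2
          + γ ^ 2 * L ^ 2 * ‖φ i - xbar‖ ^ 2) := Finset.sum_le_sum fun i _ => hbd i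
      _ = C₀ + 4 * γ ^ 2 * ∑ i, ‖g i ω - gradient (f i) (φ i)‖ ^ 2 := by
        simp only [Finset.mul_sum, Finset.sum_add_distrib, ← Finset.mul_sum,
          Finset.sum_const, Finset.card_univ, Fintype.card_fin, nsmul_eq_mul]
        rw [hC₀, hnY, hS]
        ring
  have step1 : ∫ ω, ‖q ω‖ ^ 2 ∂P ≤
      ∫ ω, (C₀ + 4 * γ ^ 2 * ∑ i, ‖g i ω - gradient (f i) (φ i)‖ ^ 2) ∂P := by
    refine integral_mono_of_nonneg (ae_of_all _ fun ω => by positivity) hBint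
      (ae_of_all _ hkey)
  have step2 : ∫ ω, (C₀ + 4 * γ ^ 2 * ∑ i, ‖g i ω - gradient (f i) (φ i)‖ ^ 2) ∂P
      = C₀ + 4 * γ ^ 2 * ∑ i, ∫ ω, ‖g i ω - gradient (f i) (φ i)‖ ^ 2 ∂P := by
    rw [integral_add (integrable_const _)
        ((integrable_finset_sum _ fun i _ => hint i).const_mul _),
      integral_const, probReal_univ, smul_eq_mul, one_mul,
      integral_const_mul, integral_finset_sum _ fun i _ => hint i]
  have hfin : 4 * γ ^ 2 * ∑ i, ∫ ω, ‖g i ω - gradient (f i) (φ i)‖ ^ 2 ∂P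
      ≤ 4 * γ ^ 2 * (2 * L ^ 2 * S + 2 * L ^ 2 * T) := by
    refine mul_le_mul_of_nonneg_left hvar (by positivity)
  rw [step2] at step1
  rw [hC₀] at step1
  linarith [step1, hfin]
end
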